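/- Let n ≥ 1, let μ be the Haar probability measure on SO(n), and let f(x) = ∫_{SO(n)} exp(tr(x·y)) dμ(y) be the Fisher integral on the space of n×n real matrices. Then for every n×n real matrix x: Σ_{σ ∈ S_n} sgn(σ) · (∂ⁿ f / ∂x_{1σ(1)} ∂x_{2σ(2)} ⋯ ∂x_{nσ(n)})(x) = f(x), where the sum ranges over all permutations σ of {1,…,n}, sgn(σ) is the sign of σ, and the operator is the n-fold iterated partial derivative in the matrix-entry coordinates x_{1σ(1)}, …, x_{nσ(n)}. -/

import Mathlib

open MeasureTheory Matrix

attribute [local instance] Matrix.normedAddCommGroup Matrix.normedSpace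

noncomputable instance matrixMeasurableSpace (n : ℕ) :
    MeasurableSpace (Matrix (Fin n) (Fin n) ℝ) := borel _

instance matrixBorelSpace (n : ℕ) : BorelSpace (Matrix (Fin n) (Fin n) ℝ) := ⟨rfl⟩

/-- The special orthogonal group `SO(n)`, viewed as a subset of the space of
`n × n` real matrices. -/
def SO (n : ℕ) : Set (Matrix (Fin n) (Fin n) ℝ) :=
  {y | yᵀ * y = 1 ∧ y.det = 1}

/-- `μ` is the Haar probability measure of `SO(n)`, viewed as a measure on the space of
`n × n` real matrices: it is a probability measure carried by `SO(n)` which is invariant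
under left translation by elements of `SO(n)`. -/
structure IsHaarSO (n : ℕ) (μ : Measure (Matrix (Fin n) (Fin n) ℝ)) : Prop where
  isProbabilityMeasure : IsProbabilityMeasure μ
  ae_mem : ∀ᵐ y ∂μ, y ∈ SO n
  left_invariant : ∀ a ∈ SO n, Measure.map (fun y => a * y) μ = μ

/-- The Fisher integral `f(x) = ∫_{SO(n)} exp(tr(x·y)) dμ(y)`, where
`tr(x·y) = Σᵢⱼ xᵢⱼ yᵢⱼ`. -/
noncomputable def fisher (n : ℕ) (μ : Measure (Matrix (Fin n) (Fin n) ℝ))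
    (x : Matrix (Fin n) (Fin n) ℝ) : ℝ :=
  ∫ y, Real.exp (∑ i, ∑ j, x i j * y i j) ∂μ

/-- The partial derivative operator `∂/∂x_{a b}` in the `(a,b)` matrix-entry coordinate. -/
noncomputable def pd {n : ℕ} (a b : Fin n) (g : Matrix (Fin n) (Fin n) ℝ → ℝ) :
    Matrix (Fin n) (Fin n) ℝ → ℝ :=
  fun x => fderiv ℝ g x (single a b 1)

noncomputable instance matrixNormTop (n : ℕ) : TopologicalSpace (Matrix (Fin n) (Fin n) ℝ) :=
  @UniformSpace.toTopologicalSpace _ (@PseudoMetricSpace.toUniformSpace _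
    (Matrix.normedAddCommGroup (m := Fin n) (n := Fin n) (α := ℝ)).toPseudoMetricSpace)

instance matrixNormBorelSpace (n : ℕ) : BorelSpace (Matrix (Fin n) (Fin n) ℝ) := ⟨rfl⟩

/-- the inner product as a linear functional -/
def ipL {n : ℕ} (y : Matrix (Fin n) (Fin n) ℝ) : Matrix (Fin n) (Fin n) ℝ →ₗ[ℝ] ℝ where
  toFun x := ∑ i, ∑ j, x i j * y i j
  map_add' a b := by simp [add_mul, Finset.sum_add_distrib]
  map_smul' c a := by simp [Finset.mul_sum, mul_assoc]

noncomputable def ipC {n : ℕ} (y : Matrix (Fin n) (Fin n) ℝ) :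
    Matrix (Fin n) (Fin n) ℝ →L[ℝ] ℝ := (ipL y).toContinuousLinearMap

lemma ipC_apply {n : ℕ} (y x : Matrix (Fin n) (Fin n) ℝ) :
    ipC y x = ∑ i, ∑ j, x i j * y i j := rfl

lemma ipC_cont {n : ℕ} : Continuous (ipC (n := n)) := by
  have : IsLinearMap ℝ (ipC (n := n)) := by
    constructor
    · intro a b; ext x; simp [ipC_apply, mul_add, Finset.sum_add_distrib]
    · intro c a; ext x; simp [ipC_apply, Finset.mul_sum]; congr 1; ext i; congr 1; ext j; ring
  exact (this.mk' _).continuous_of_finiteDimensional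

lemma ipC_bound {n : ℕ} (y : Matrix (Fin n) (Fin n) ℝ) (hy : ∀ a b, |y a b| ≤ 1) :
    ‖ipC y‖ ≤ (n : ℝ)^2 := by
  apply ContinuousLinearMap.opNorm_le_bound _ (by positivity)
  intro x
  rw [ipC_apply]
  have h1 : ∀ i j : Fin n, |x i j * y i j| ≤ ‖x‖ := by
    intro i j
    rw [abs_mul]
    calc |x i j| * |y i j| ≤ ‖x‖ * 1 := by
          apply mul_le_mul (Matrix.norm_entry_le_entrywise_sup_norm x) (hy i j)
            (abs_nonneg _) (norm_nonneg _)
      _ = ‖x‖ := mul_one _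
  calc ‖∑ i, ∑ j, x i j * y i j‖ ≤ ∑ i : Fin n, ∑ j : Fin n, |x i j * y i j| := by
        refine (Finset.abs_sum_le_sum_abs _ _).trans ?_
        exact Finset.sum_le_sum fun i _ => Finset.abs_sum_le_sum_abs _ _
    _ ≤ ∑ _i : Fin n, ∑ _j : Fin n, ‖x‖ := by
        exact Finset.sum_le_sum fun i _ => Finset.sum_le_sum fun j _ => h1 i j
    _ = (n : ℝ)^2 * ‖x‖ := by
        simp [Finset.sum_const]
        ring

lemma SO.entry_abs_le {n : ℕ} {y : Matrix (Fin n) (Fin n) ℝ} (hy : y ∈ SO n) (a b : Fin n) :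
    |y a b| ≤ 1 := by
  have h := congrFun (congrFun hy.1 b) b
  simp only [Matrix.mul_apply, Matrix.transpose_apply, Matrix.one_apply_eq] at h
  have h2 : y a b * y a b ≤ 1 := by
    rw [← h]
    exact Finset.single_le_sum (f := fun k => y k b * y k b)
      (fun k _ => mul_self_nonneg _) (Finset.mem_univ a)
  nlinarith [abs_nonneg (y a b), sq_abs (y a b)]

lemma ipC_std {n : ℕ} (y : Matrix (Fin n) (Fin n) ℝ) (a b : Fin n) :
    ipC y (single a b 1) = y a b := by
  rw [ipC_apply]
  simp [Matrix.single, ite_and, boole_mul, Finset.sum_ite_eq]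

lemma cont_entry {n : ℕ} (i j : Fin n) :
    Continuous (fun y : Matrix (Fin n) (Fin n) ℝ => y i j) :=
  (continuous_apply j).comp (continuous_apply i)

lemma cont_ip {n : ℕ} (x : Matrix (Fin n) (Fin n) ℝ) :
    Continuous (fun y : Matrix (Fin n) (Fin n) ℝ => ipC y x) := by
  simp only [ipC_apply]
  exact continuous_finset_sum _ fun i _ => continuous_finset_sum _ fun j _ =>
    continuous_const.mul (cont_entry i j)


lemma deriv_step {n : ℕ} {μ : Measure (Matrix (Fin n) (Fin n) ℝ)} (hμ : IsHaarSO n μ)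
    {w : Matrix (Fin n) (Fin n) ℝ → ℝ} (hw_cont : Continuous w)
    (hw_bd : ∀ y ∈ SO n, |w y| ≤ 1) (a b : Fin n) (x₀ : Matrix (Fin n) (Fin n) ℝ) :
    pd a b (fun x => ∫ y, w y * Real.exp (ipC y x) ∂μ) x₀
      = ∫ y, (y a b * w y) * Real.exp (ipC y x₀) ∂μ := by
  haveI := hμ.isProbabilityMeasure
  set F' : Matrix (Fin n) (Fin n) ℝ → Matrix (Fin n) (Fin n) ℝ →
      (Matrix (Fin n) (Fin n) ℝ →L[ℝ] ℝ) :=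
    fun x y => (w y * Real.exp (ipC y x)) • ipC y with hF'
  -- basic pointwise bounds
  have hpt : ∀ x, ∀ y ∈ SO n, ‖w y * Real.exp (ipC y x)‖ ≤ Real.exp ((n:ℝ)^2 * ‖x‖) := by
    intro x y hy
    have h1 : ipC y x ≤ (n:ℝ)^2 * ‖x‖ :=
      (le_abs_self _).trans (((ipC y).le_opNorm x).trans
        (mul_le_mul_of_nonneg_right (ipC_bound y (SO.entry_abs_le hy)) (norm_nonneg _)))
    calc ‖w y * Real.exp (ipC y x)‖ = |w y| * Real.exp (ipC y x) := by
          rw [norm_mul, Real.norm_eq_abs, Real.norm_eq_abs, abs_of_pos (Real.exp_pos _)]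
      _ ≤ 1 * Real.exp ((n:ℝ)^2 * ‖x‖) :=
          mul_le_mul (hw_bd y hy) (Real.exp_le_exp.mpr h1) (Real.exp_pos _).le zero_le_one
      _ = _ := one_mul _
  have hmeas : ∀ x, AEStronglyMeasurable (fun y => w y * Real.exp (ipC y x)) μ :=
    fun x => (hw_cont.mul (Real.continuous_exp.comp (cont_ip x))).aestronglyMeasurable
  have hint : ∀ x, Integrable (fun y => w y * Real.exp (ipC y x)) μ := by
    intro x
    exact Integrable.mono' (integrable_const (Real.exp ((n:ℝ)^2 * ‖x‖))) (hmeas x)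
      (hμ.ae_mem.mono fun y hy => hpt x y hy)
  have hF'cont : ∀ x, Continuous (fun y => F' x y) :=
    fun x => (hw_cont.mul (Real.continuous_exp.comp (cont_ip x))).smul ipC_cont
  have hF'bd : ∀ x, ∀ y ∈ SO n, ‖F' x y‖ ≤ (n:ℝ)^2 * Real.exp ((n:ℝ)^2 * ‖x‖) := by
    intro x y hy
    show ‖(w y * Real.exp (ipC y x)) • ipC y‖ ≤ _
    refine (norm_smul_le (w y * Real.exp (ipC y x)) (ipC y)).trans ?_
    calc ‖w y * Real.exp (ipC y x)‖ * ‖ipC y‖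
        ≤ Real.exp ((n:ℝ)^2 * ‖x‖) * (n:ℝ)^2 :=
          mul_le_mul (hpt x y hy) (ipC_bound y (SO.entry_abs_le hy)) (norm_nonneg _)
            (Real.exp_pos _).le
      _ = _ := mul_comm _ _
  have hdiff : ∀ y, ∀ x, HasFDerivAt (fun x => w y * Real.exp (ipC y x)) (F' x y) x := by
    intro y x
    have h2 : HasFDerivAt (fun x => Real.exp (ipC y x)) (Real.exp (ipC y x) • ipC y) x :=
      ((ipC y).hasFDerivAt (x := x)).exp
    have h3 := h2.const_mul (w y)
    simpa [hF', smul_smul] using h3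
  have hball : ∀ x ∈ Metric.ball x₀ 1, ‖x‖ ≤ ‖x₀‖ + 1 := by
    intro x hx
    have h := mem_ball_iff_norm.mp hx
    calc ‖x‖ = ‖x₀ + (x - x₀)‖ := by rw [show x₀ + (x - x₀) = x by abel]
      _ ≤ ‖x₀‖ + ‖x - x₀‖ := norm_add_le _ _
      _ ≤ ‖x₀‖ + 1 := by linarith
  have main : HasFDerivAt (fun x => ∫ y, w y * Real.exp (ipC y x) ∂μ)
      (∫ y, F' x₀ y ∂μ) x₀ := by
    apply hasFDerivAt_integral_of_dominated_of_fderiv_le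
      (bound := fun _ => (n:ℝ)^2 * Real.exp ((n:ℝ)^2 * (‖x₀‖ + 1))) (Metric.ball_mem_nhds x₀ one_pos)
      (Filter.Eventually.of_forall fun x => hmeas x) (hint x₀)
      ((hF'cont x₀).aestronglyMeasurable)
    · refine hμ.ae_mem.mono fun y hy x hx => (hF'bd x y hy).trans ?_
      have := hball x hx
      have hexp : Real.exp ((n:ℝ)^2 * ‖x‖) ≤ Real.exp ((n:ℝ)^2 * (‖x₀‖ + 1)) :=
        Real.exp_le_exp.mpr (mul_le_mul_of_nonneg_left this (by positivity))
      exact mul_le_mul_of_nonneg_left hexp (by positivity)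
    · exact integrable_const _
    · exact Filter.Eventually.of_forall fun y x _ => hdiff y x
  have hF'int : Integrable (fun y => F' x₀ y) μ := by
    refine Integrable.mono' (integrable_const ((n:ℝ)^2 * Real.exp ((n:ℝ)^2 * ‖x₀‖)))
      ((hF'cont x₀).aestronglyMeasurable) (hμ.ae_mem.mono fun y hy => hF'bd x₀ y hy)
  rw [pd]
  erw [main.fderiv]
  erw [ContinuousLinearMap.integral_apply hF'int]
  congr 1
  ext y
  rw [hF']
  simp only [ContinuousLinearMap.smul_apply, smul_eq_mul, ipC_std]
  ring

lemma integrable_w {n : ℕ} {μ : Measure (Matrix (Fin n) (Fin n) ℝ)} (hμ : IsHaarSO n μ)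
    {w : Matrix (Fin n) (Fin n) ℝ → ℝ} (hw_cont : Continuous w)
    (hw_bd : ∀ y ∈ SO n, |w y| ≤ 1) (x : Matrix (Fin n) (Fin n) ℝ) :
    Integrable (fun y => w y * Real.exp (ipC y x)) μ := by
  haveI := hμ.isProbabilityMeasure
  refine Integrable.mono' (integrable_const (Real.exp ((n:ℝ)^2 * ‖x‖)))
    ((hw_cont.mul (Real.continuous_exp.comp (cont_ip x))).aestronglyMeasurable)
    (hμ.ae_mem.mono fun y hy => ?_)
  have h1 : ipC y x ≤ (n:ℝ)^2 * ‖x‖ :=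
    (le_abs_self _).trans (((ipC y).le_opNorm x).trans
      (mul_le_mul_of_nonneg_right (ipC_bound y (SO.entry_abs_le hy)) (norm_nonneg _)))
  calc ‖w y * Real.exp (ipC y x)‖ = |w y| * Real.exp (ipC y x) := by
        rw [norm_mul, Real.norm_eq_abs, Real.norm_eq_abs, abs_of_pos (Real.exp_pos _)]
    _ ≤ 1 * Real.exp ((n:ℝ)^2 * ‖x‖) :=
        mul_le_mul (hw_bd y hy) (Real.exp_le_exp.mpr h1) (Real.exp_pos _).le zero_le_one
    _ = _ := one_mul _

lemma w_cont {n : ℕ} (ps : List (Fin n × Fin n)) :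
    Continuous (fun y : Matrix (Fin n) (Fin n) ℝ =>
      (ps.map fun p : Fin n × Fin n => y p.1 p.2).prod) := by
  induction ps with
  | nil => simpa using continuous_const
  | cons p t ih =>
      simp only [List.map_cons, List.prod_cons]
      exact (cont_entry p.1 p.2).mul ih

lemma w_bd {n : ℕ} (ps : List (Fin n × Fin n)) :
    ∀ y ∈ SO n, |(ps.map fun p : Fin n × Fin n => y p.1 p.2).prod| ≤ 1 := by
  intro y hy
  induction ps with
  | nil => simp
  | cons p t ih =>
      simp only [List.map_cons, List.prod_cons]
      rw [abs_mul]
      exact mul_le_one₀ (SO.entry_abs_le hy p.1 p.2) (abs_nonneg _) ih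

lemma key {n : ℕ} {μ : Measure (Matrix (Fin n) (Fin n) ℝ)} (hμ : IsHaarSO n μ)
    (ps : List (Fin n × Fin n)) :
    ∀ x, ((ps.map fun p : Fin n × Fin n => pd p.1 p.2).foldr (· ∘ ·) id)
        (fun x => ∫ y, Real.exp (ipC y x) ∂μ) x
      = ∫ y, (ps.map fun p : Fin n × Fin n => y p.1 p.2).prod * Real.exp (ipC y x) ∂μ := by
  induction ps with
  | nil => intro x; simp
  | cons p t ih =>
      intro x
      have hG := funext ih
      simp only [List.map_cons, List.foldr_cons, Function.comp_apply]
      rw [hG]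
      rw [deriv_step hμ (w_cont t) (w_bd t) p.1 p.2 x]
      simp [List.prod_cons]


theorem fisher_annihilated_by_determinant_operator (n : ℕ) (hn : 1 ≤ n)
    (μ : Measure (Matrix (Fin n) (Fin n) ℝ)) (hμ : IsHaarSO n μ)
    (x : Matrix (Fin n) (Fin n) ℝ) :
    ∑ σ : Equiv.Perm (Fin n), ((Equiv.Perm.sign σ : ℤ) : ℝ) *
      ((List.ofFn fun i : Fin n => pd i (σ i)).foldr (· ∘ ·) id (fisher n μ)) x
      = fisher n μ x := by
  haveI := hμ.isProbabilityMeasure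
  have hfish : fisher n μ = fun x => ∫ y, Real.exp (ipC y x) ∂μ := rfl
  have hterm : ∀ σ : Equiv.Perm (Fin n),
      ((List.ofFn fun i : Fin n => pd i (σ i)).foldr (· ∘ ·) id (fisher n μ)) x
      = ∫ y, ((List.ofFn fun i : Fin n => (i, σ i)).map
          fun p : Fin n × Fin n => y p.1 p.2).prod * Real.exp (ipC y x) ∂μ := by
    intro σ
    have h1 : (List.ofFn fun i : Fin n => pd i (σ i))
        = (List.ofFn fun i : Fin n => (i, σ i)).map (fun p : Fin n × Fin n => pd p.1 p.2) := by
      rw [List.map_ofFn]; rfl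
    rw [h1, hfish, key hμ _ x]
  have hdet : ∀ y : Matrix (Fin n) (Fin n) ℝ,
      (∑ σ : Equiv.Perm (Fin n), ((Equiv.Perm.sign σ : ℤ) : ℝ) *
        ((List.ofFn fun i : Fin n => (i, σ i)).map
          fun p : Fin n × Fin n => y p.1 p.2).prod) = yᵀ.det := by
    intro y
    rw [Matrix.det_apply']
    refine Finset.sum_congr rfl fun σ _ => ?_
    congr 1
    rw [List.map_ofFn, List.prod_ofFn]
    rfl
  calc ∑ σ : Equiv.Perm (Fin n), ((Equiv.Perm.sign σ : ℤ) : ℝ) *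
        ((List.ofFn fun i : Fin n => pd i (σ i)).foldr (· ∘ ·) id (fisher n μ)) x
      = ∑ σ : Equiv.Perm (Fin n), ∫ y, ((Equiv.Perm.sign σ : ℤ) : ℝ) *
          (((List.ofFn fun i : Fin n => (i, σ i)).map
            fun p : Fin n × Fin n => y p.1 p.2).prod * Real.exp (ipC y x)) ∂μ := by
        refine Finset.sum_congr rfl fun σ _ => ?_
        rw [hterm σ, ← integral_const_mul]
    _ = ∫ y, ∑ σ : Equiv.Perm (Fin n), ((Equiv.Perm.sign σ : ℤ) : ℝ) *
          (((List.ofFn fun i : Fin n => (i, σ i)).map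
            fun p : Fin n × Fin n => y p.1 p.2).prod * Real.exp (ipC y x)) ∂μ := by
        rw [← integral_finset_sum]
        intro σ _
        exact (integrable_w hμ (w_cont _) (w_bd _) x).const_mul _
    _ = ∫ y, yᵀ.det * Real.exp (ipC y x) ∂μ := by
        congr 1
        ext y
        rw [← hdet y, Finset.sum_mul]
        refine Finset.sum_congr rfl fun σ _ => ?_
        ring
    _ = ∫ y, Real.exp (ipC y x) ∂μ := by
        refine integral_congr_ae (hμ.ae_mem.mono fun y hy => ?_)
        show yᵀ.det * Real.exp (ipC y x) = Real.exp (ipC y x)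
        rw [Matrix.det_transpose, hy.2, one_mul]
    _ = fisher n μ x := rfl
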